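/- If all roots of the permanental polynomial π(G,x) of a graph G are real, then G has no edges. -/

import Mathlib

open Polynomial

/-- The permanental polynomial of a simple graph `G`:
`π(G, x) = per(x I − A(G))`, computed over `ℂ[X]`. -/
noncomputable def permPoly {V : Type*} [Fintype V] [DecidableEq V]
    (G : SimpleGraph V) : Polynomial ℂ :=
  letI := Classical.decRel G.Adj
  Matrix.permanent ((X : Polynomial ℂ) • (1 : Matrix V V (Polynomial ℂ))
      - (SimpleGraph.adjMatrix (Polynomial ℂ) G))

section aux

lemma Multiset.esymm_one' (s : Multiset ℂ) : s.esymm 1 = s.sum := by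
  simp [Multiset.esymm, Multiset.powersetCard_one, Multiset.map_map, Function.comp]

lemma esymm_two_cons (a : ℂ) (s : Multiset ℂ) :
    (a ::ₘ s).esymm 2 = a * s.sum + s.esymm 2 := by
  have h : Multiset.powersetCard 2 (a ::ₘ s)
      = Multiset.powersetCard 2 s + (Multiset.powersetCard 1 s).map (Multiset.cons a) :=
    Multiset.powersetCard_cons 1 a s
  rw [Multiset.esymm, h, Multiset.map_add, Multiset.sum_add]
  rw [Multiset.map_map]
  have : ((Multiset.powersetCard 1 s).map (Multiset.prod ∘ Multiset.cons a)).sum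
      = a * s.sum := by
    rw [Multiset.powersetCard_one, Multiset.map_map]
    simp only [Function.comp, Multiset.prod_cons, Multiset.prod_singleton]
    rw [Multiset.sum_map_mul_left]
    simp [Multiset.map_id']
  rw [this, Multiset.esymm, add_comm]

lemma sq_sum_multiset (s : Multiset ℂ) :
    s.sum ^ 2 = (s.map (fun z => z ^ 2)).sum + 2 * s.esymm 2 := by
  induction s using Multiset.induction with
  | empty => simp [Multiset.esymm, Multiset.powersetCard_zero_right]
  | cons a s ih =>
      rw [Multiset.sum_cons, Multiset.map_cons, Multiset.sum_cons, esymm_two_cons]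
      linear_combination ih

end aux

section main

variable {V : Type*} [Fintype V] [DecidableEq V] (G : SimpleGraph V)

lemma permPoly_coeff (d : ℕ) :
    letI := Classical.decRel G.Adj
    (permPoly G).coeff d =
      ∑ σ : Equiv.Perm V, if Fintype.card V - σ.support.card = d then
        (∏ i ∈ σ.support, -(if G.Adj (σ i) i then (1 : ℂ) else 0)) else 0 := by
  letI := Classical.decRel G.Adj
  rw [permPoly, Matrix.permanent, Polynomial.finset_sum_coeff]
  refine Finset.sum_congr rfl fun σ _ => ?_
  have hterm : (∏ i, ((X : Polynomial ℂ) • (1 : Matrix V V (Polynomial ℂ))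
        - (SimpleGraph.adjMatrix (Polynomial ℂ) G)) (σ i) i)
      = C (∏ i ∈ σ.support, -(if G.Adj (σ i) i then (1 : ℂ) else 0))
          * X ^ (Fintype.card V - σ.support.card) := by
    rw [← Finset.prod_mul_prod_compl σ.support]
    congr 1
    · rw [map_prod]
      refine Finset.prod_congr rfl fun i hi => ?_
      have hne : σ i ≠ i := Equiv.Perm.mem_support.mp hi
      simp [Matrix.sub_apply, Matrix.smul_apply, Matrix.one_apply, hne,
        SimpleGraph.adjMatrix_apply, apply_ite C]
    · have : ∀ i ∈ σ.supportᶜ, ((X : Polynomial ℂ) • (1 : Matrix V V (Polynomial ℂ))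
          - (SimpleGraph.adjMatrix (Polynomial ℂ) G)) (σ i) i = X := by
        intro i hi
        have hfix : σ i = i := by
          have := Finset.mem_compl.mp hi
          simpa [Equiv.Perm.mem_support] using this
        simp [hfix, Matrix.sub_apply, Matrix.smul_apply, Matrix.one_apply,
          SimpleGraph.adjMatrix_apply, G.loopless.irrefl i]
      rw [Finset.prod_congr rfl this, Finset.prod_const, Finset.card_compl]
  rw [hterm, Polynomial.coeff_C_mul, Polynomial.coeff_X_pow]
  by_cases h : Fintype.card V - σ.support.card = d
  · rw [if_pos h, if_pos h.symm, mul_one]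
  · rw [if_neg h, if_neg (fun hh => h hh.symm), mul_zero]

lemma permPoly_degree_le : (permPoly G).degree ≤ (Fintype.card V : ℕ) := by
  letI := Classical.decRel G.Adj
  rw [permPoly, Matrix.permanent]
  refine le_trans (Polynomial.degree_sum_le _ _) ?_
  refine Finset.sup_le fun σ _ => ?_
  refine le_trans (Polynomial.degree_prod_le _ _) ?_
  have : ∀ i : V, (((X : Polynomial ℂ) • (1 : Matrix V V (Polynomial ℂ))
      - (SimpleGraph.adjMatrix (Polynomial ℂ) G)) (σ i) i).degree ≤ 1 := by
    intro i
    simp only [Matrix.sub_apply, Matrix.smul_apply, Matrix.one_apply, smul_eq_mul,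
      SimpleGraph.adjMatrix_apply]
    refine le_trans (Polynomial.degree_sub_le _ _) ?_
    simp only [max_le_iff]
    constructor
    · split <;> simp [Polynomial.degree_X_le]
    · split <;> simp
  refine le_trans (Finset.sum_le_sum fun i _ => this i) ?_
  simp [Finset.card_univ]

end main

theorem edgeless_of_real_perSpectrum
    {V : Type*} [Fintype V] [DecidableEq V] (G : SimpleGraph V)
    (h : ∀ z ∈ (permPoly G).roots, z.im = 0) :
    ∀ u v : V, ¬ G.Adj u v := by
  intro u v huv
  letI := Classical.decRel G.Adj
  set n := Fintype.card V with hn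
  have huvne : u ≠ v := G.ne_of_adj huv
  have hn2 : 2 ≤ n := by
    have : ({u, v} : Finset V).card ≤ Fintype.card V := Finset.card_le_univ _
    rwa [Finset.card_insert_of_notMem (by simpa using huvne), Finset.card_singleton] at this
  have hsupp : ∀ σ : Equiv.Perm V, σ.support.card ≤ n := fun σ => Finset.card_le_univ _
  -- coefficient n is 1
  have hcoeffn : (permPoly G).coeff n = 1 := by
    rw [permPoly_coeff]
    rw [Finset.sum_eq_single (1 : Equiv.Perm V)]
    · simp [hn]
    · intro σ _ hσ
      have : σ.support.card ≠ 0 := by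
        simpa [Equiv.Perm.card_support_eq_zero] using hσ
      rw [if_neg (by omega)]
    · simp
  -- coefficient (n-1) is 0
  have hcoeffn1 : (permPoly G).coeff (n - 1) = 0 := by
    rw [permPoly_coeff]
    refine Finset.sum_eq_zero fun σ _ => ?_
    have h1 := Equiv.Perm.card_support_ne_one σ
    have h0 : σ.support.card = 0 → σ.support.card = 0 := id
    rw [if_neg]
    have := hsupp σ
    intro hc
    -- n - k = n - 1 with k ≤ n, n ≥ 2 forces k = 1
    have hk1 : σ.support.card = 1 := by omega
    exact h1 hk1
  -- each summand for coefficient (n-2) is 0 or 1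
  have hsummand : ∀ σ : Equiv.Perm V,
      (if n - σ.support.card = n - 2 then
        (∏ i ∈ σ.support, -(if G.Adj (σ i) i then (1 : ℂ) else 0)) else 0) = 0 ∨
      (if n - σ.support.card = n - 2 then
        (∏ i ∈ σ.support, -(if G.Adj (σ i) i then (1 : ℂ) else 0)) else 0) = 1 := by
    intro σ
    by_cases hc : n - σ.support.card = n - 2
    · rw [if_pos hc]
      have h1 := Equiv.Perm.card_support_ne_one σ
      have hle := hsupp σ
      by_cases h0 : σ.support.card = 0
      · omega
      have hk2 : σ.support.card = 2 := by omega
      obtain ⟨x, y, hxy, hswap⟩ := Equiv.Perm.card_support_eq_two.mp hk2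
      subst hswap
      rw [Equiv.Perm.support_swap hxy, Finset.prod_pair hxy]
      rw [Equiv.swap_apply_left, Equiv.swap_apply_right]
      by_cases hadj : G.Adj x y
      · rw [if_pos hadj.symm, if_pos hadj]; right; ring
      · rw [if_neg hadj]; left; ring
    · rw [if_neg hc]; left; rfl
  -- the swap u v contributes 1
  have hswapuv : (if n - (Equiv.swap u v).support.card = n - 2 then
        (∏ i ∈ (Equiv.swap u v).support,
          -(if G.Adj ((Equiv.swap u v) i) i then (1 : ℂ) else 0)) else 0) = 1 := by
    rw [if_pos (by rw [Equiv.Perm.card_support_swap huvne])]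
    rw [Equiv.Perm.support_swap huvne, Finset.prod_pair huvne,
      Equiv.swap_apply_left, Equiv.swap_apply_right,
      if_pos huv.symm, if_pos huv]
    ring
  -- coefficient (n-2) facts
  have hcoeffn2 : (permPoly G).coeff (n - 2) =
      ∑ σ : Equiv.Perm V, (if n - σ.support.card = n - 2 then
        (∏ i ∈ σ.support, -(if G.Adj (σ i) i then (1 : ℂ) else 0)) else 0) :=
    permPoly_coeff G (n - 2)
  have him2 : ((permPoly G).coeff (n - 2)).im = 0 := by
    rw [hcoeffn2, Complex.im_sum]
    refine Finset.sum_eq_zero fun σ _ => ?_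
    rcases hsummand σ with h' | h' <;> rw [h'] <;> simp
  have hre2 : 1 ≤ ((permPoly G).coeff (n - 2)).re := by
    rw [hcoeffn2, Complex.re_sum]
    have := Finset.single_le_sum (f := fun σ : Equiv.Perm V =>
        (if n - σ.support.card = n - 2 then
          (∏ i ∈ σ.support, -(if G.Adj (σ i) i then (1 : ℂ) else 0)) else 0).re)
      (fun σ _ => by rcases hsummand σ with h' | h' <;> rw [h'] <;> simp)
      (Finset.mem_univ (Equiv.swap u v))
    rw [hswapuv] at this
    simpa using this
  -- permPoly is monic of degree n
  have hne : (permPoly G).coeff n ≠ 0 := by rw [hcoeffn]; exact one_ne_zero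
  have hdegle : (permPoly G).natDegree ≤ n :=
    Polynomial.natDegree_le_iff_degree_le.mpr (permPoly_degree_le G)
  have hnatdeg : (permPoly G).natDegree = n :=
    le_antisymm hdegle (Polynomial.le_natDegree_of_ne_zero hne)
  have hlead : (permPoly G).leadingCoeff = 1 := by
    rw [Polynomial.leadingCoeff, hnatdeg, hcoeffn]
  have hp0 : permPoly G ≠ 0 := by
    intro h0
    rw [h0] at hcoeffn
    simp at hcoeffn
  -- roots
  have hsplits : ((permPoly G).roots).card = (permPoly G).natDegree :=
    IsAlgClosed.card_roots_eq_natDegree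
  set s := (permPoly G).roots with hs
  have hv1 : (permPoly G).coeff (n - 1) =
      (permPoly G).leadingCoeff * (-1) ^ ((permPoly G).natDegree - (n - 1))
        * s.esymm ((permPoly G).natDegree - (n - 1)) :=
    Polynomial.coeff_eq_esymm_roots_of_card hsplits (by omega)
  have hv2 : (permPoly G).coeff (n - 2) =
      (permPoly G).leadingCoeff * (-1) ^ ((permPoly G).natDegree - (n - 2))
        * s.esymm ((permPoly G).natDegree - (n - 2)) :=
    Polynomial.coeff_eq_esymm_roots_of_card hsplits (by omega)
  rw [hnatdeg] at hv1 hv2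
  have e1 : n - (n - 1) = 1 := by omega
  have e2 : n - (n - 2) = 2 := by omega
  rw [e1, hlead, hcoeffn1] at hv1
  rw [e2, hlead] at hv2
  have hsum0 : s.sum = 0 := by
    have : s.esymm 1 = 0 := by
      have := hv1.symm
      simpa using this
    rwa [Multiset.esymm_one'] at this
  have hesymm2 : s.esymm 2 = (permPoly G).coeff (n - 2) := by
    rw [hv2]; ring
  -- sum of squares of roots
  have hsq : (s.map (fun z => z ^ 2)).sum = -2 * (permPoly G).coeff (n - 2) := by
    have := sq_sum_multiset s
    rw [hsum0, hesymm2] at this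
    have h0 : (0 : ℂ) = (s.map (fun z => z ^ 2)).sum + 2 * (permPoly G).coeff (n - 2) := by
      simpa using this
    linear_combination -h0
  -- real part of sum of squares is nonneg
  have hre_nonneg : 0 ≤ ((s.map (fun z => z ^ 2)).sum).re := by
    have : ((s.map (fun z => z ^ 2)).sum).re
        = ((s.map (fun z => z ^ 2)).map Complex.re).sum := by
      rw [← Complex.coe_reAddGroupHom]
      exact map_multiset_sum Complex.reAddGroupHom _
    rw [this, Multiset.map_map]
    refine Multiset.sum_nonneg ?_
    intro x hx
    obtain ⟨z, hz, rfl⟩ := Multiset.mem_map.mp hx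
    have hzim : z.im = 0 := h z hz
    simp only [Function.comp]
    rw [sq, Complex.mul_re, hzim]
    nlinarith [sq_nonneg z.re]
  rw [hsq] at hre_nonneg
  have : (-2 * (permPoly G).coeff (n - 2)).re = -2 * ((permPoly G).coeff (n - 2)).re := by
    simp [Complex.mul_re, him2]
  rw [this] at hre_nonneg
  linarith
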